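/- Let (A, ρ, [.,.]) be a skew algebroid, Ω a nondegenerate 2-form on A, θ an A-1-form, and (Π, ξ) the associated pair (Π(α,β) = Ω(♯_Ω(α), ♯_Ω(β)), ξ = ♯_Ω(θ)). Then (Ω, θ) is a locally conformally symplectic structure (d_ρΩ + θ∧Ω = 0 and d_ρθ = 0) if and only if (Π, ξ) is a Jacobi structure ([Π,Π] = 2ξ∧Π and L^ρ_ξΠ = 0). Moreover, with α = ♭_Ω(a), β = ♭_Ω(b), γ = ♭_Ω(c), the identities ((1/2)[Π,Π] − ξ∧Π)(α,β,γ) = (d_ρΩ + θ∧Ω)(a,b,c) and L^ρ_ξΠ(α,β) = −L^ρ_ξΩ(a,b) hold. -/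

import Mathlib

/-- Algebraic model of a skew algebroid over a base manifold: `R` plays the role of
the ring of smooth functions, `G` the module of sections of the anchored bundle,
`bracket` the skew-symmetric bracket satisfying the Leibniz rule, and `anchor`
gives the action of sections on functions by derivations. -/
structure SkewAlgebroid (R : Type*) [CommRing R] (G : Type*)
    [AddCommGroup G] [Module R G] where
  bracket : G → G → G
  anchor : G → R → R
  bracket_add_left : ∀ a b c, bracket (a + b) c = bracket a c + bracket b c
  bracket_skew : ∀ a b, bracket a b = - bracket b a
  anchor_add : ∀ a b φ, anchor (a + b) φ = anchor a φ + anchor b φ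
  anchor_smul : ∀ (φ : R) a ψ, anchor (φ • a) ψ = φ * anchor a ψ
  anchor_map_add : ∀ a φ ψ, anchor a (φ + ψ) = anchor a φ + anchor a ψ
  anchor_map_mul : ∀ a φ ψ, anchor a (φ * ψ) = φ * anchor a ψ + ψ * anchor a φ
  leibniz : ∀ a (φ : R) b, bracket a (φ • b) = φ • bracket a b + anchor a φ • b

namespace SkewAlgebroid

variable {R : Type*} [CommRing R] {G : Type*} [AddCommGroup G] [Module R G]

/-- The bivector field associated to a sharp map `♯ : A* → A`: `Π(α,β) = β(♯α)`. -/
def biv (sharp : (G →ₗ[R] R) → G) (α β : G →ₗ[R] R) : R := β (sharp α)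

/-- `♯_{Π,ξ}(α) = ♯_Π(α) + α(ξ)ξ`. -/
def sharpJ (sharp : (G →ₗ[R] R) → G) (ξ : G) (α : G →ₗ[R] R) : G := sharp α + α ξ • ξ

/-- `(ξ ∧ Π)(α,β,γ)`. -/
def wedgeVB (ξ : G) (sharp : (G →ₗ[R] R) → G) (α β γ : G →ₗ[R] R) : R :=
  α ξ * biv sharp β γ - β ξ * biv sharp α γ + γ ξ * biv sharp α β

variable (S : SkewAlgebroid R G)

lemma bracket_add_right (a b c : G) :
    S.bracket a (b + c) = S.bracket a b + S.bracket a c := by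
  rw [S.bracket_skew a (b + c), S.bracket_add_left, S.bracket_skew b a, S.bracket_skew c a]
  abel

/-- The Lie `A`-derivative of a 1-form along a section. -/
def lieDeriv (a : G) (α : G →ₗ[R] R) : G →ₗ[R] R where
  toFun b := S.anchor a (α b) - α (S.bracket a b)
  map_add' b c := by
    (try dsimp only)
    rw [map_add, S.anchor_map_add, S.bracket_add_right, map_add]; ring
  map_smul' φ b := by
    (try dsimp only)
    rw [map_smul, smul_eq_mul, S.anchor_map_mul, S.leibniz, map_add, map_smul, map_smul,
      smul_eq_mul, smul_eq_mul, RingHom.id_apply, smul_eq_mul]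
    ring

/-- The exterior `A`-differential of a function, as a 1-form. -/
def dform (φ : R) : G →ₗ[R] R where
  toFun a := S.anchor a φ
  map_add' a b := S.anchor_add a b φ
  map_smul' c a := by (try dsimp only); rw [S.anchor_smul]; rfl

/-- The exterior `A`-differential of a 1-form. -/
def dOne (η : G →ₗ[R] R) (a b : G) : R :=
  S.anchor a (η b) - S.anchor b (η a) - η (S.bracket a b)

/-- The exterior `A`-differential of a 2-form. -/
def dTwo (Ω : G →ₗ[R] G →ₗ[R] R) (a b c : G) : R :=
  S.anchor a (Ω b c) - S.anchor b (Ω a c) + S.anchor c (Ω a b)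
    - Ω (S.bracket a b) c + Ω (S.bracket a c) b - Ω (S.bracket b c) a

/-- The Lie `A`-derivative of a 2-form along a section. -/
def lieTwo (ξ : G) (Ω : G →ₗ[R] G →ₗ[R] R) (a b : G) : R :=
  S.anchor ξ (Ω a b) - Ω (S.bracket ξ a) b - Ω a (S.bracket ξ b)

/-- The Koszul bracket of 1-forms associated with the bivector field given by `sharp`:
`[α,β]_Π = L_{♯α}β − L_{♯β}α − d_ρ(Π(α,β))`. -/
def koszul (sharp : (G →ₗ[R] R) → G) (α β : G →ₗ[R] R) : G →ₗ[R] R :=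
  S.lieDeriv (sharp α) β - S.lieDeriv (sharp β) α - S.dform (biv sharp α β)

/-- The Schouten–Nijenhuis bracket `[Π,Π]`, defined (as in the contravariant calculus)
by `[Π,Π] = −d_{ρ_Π}Π` via the structure `(ρ_Π, [.,.]_Π)` on the dual. -/
def schouten (sharp : (G →ₗ[R] R) → G) (α β γ : G →ₗ[R] R) : R :=
  -(S.anchor (sharp α) (biv sharp β γ) - S.anchor (sharp β) (biv sharp α γ)
      + S.anchor (sharp γ) (biv sharp α β)
      - biv sharp (S.koszul sharp α β) γ + biv sharp (S.koszul sharp α γ) β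
      - biv sharp (S.koszul sharp β γ) α)

/-- The Lie `A`-derivative `L^ρ_ξ Π` of the bivector field. -/
def lieBiv (ξ : G) (sharp : (G →ₗ[R] R) → G) (α β : G →ₗ[R] R) : R :=
  S.anchor ξ (biv sharp α β) - biv sharp (S.lieDeriv ξ α) β - biv sharp α (S.lieDeriv ξ β)

/-- The deformed dual bracket `[α,β]^λ_{Π,ξ}`. -/
def bracketJ (sharp : (G →ₗ[R] R) → G) (ξ : G) (lam : G →ₗ[R] R) (α β : G →ₗ[R] R) :
    G →ₗ[R] R :=
  S.koszul sharp α β + α ξ • (S.lieDeriv ξ β - β) - β ξ • (S.lieDeriv ξ α - α)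
    - biv sharp α β • lam

/-- The anchor is a bracket morphism (almost Lie algebroid condition). -/
def IsAlmostLie : Prop := ∀ a b φ,
  S.anchor (S.bracket a b) φ = S.anchor a (S.anchor b φ) - S.anchor b (S.anchor a φ)

/-- The Jacobi identity for the bracket (Lie algebroid condition). -/
def IsJacobi : Prop := ∀ a b c,
  S.bracket (S.bracket a b) c + S.bracket (S.bracket b c) a + S.bracket (S.bracket c a) b = 0

end SkewAlgebroid

open SkewAlgebroid

namespace SkewAlgebroid
variable {R : Type*} [CommRing R] {G : Type*} [AddCommGroup G] [Module R G]
variable (S : SkewAlgebroid R G)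

lemma anchor_zero (a : G) : S.anchor a (0 : R) = 0 := by
  have h := S.anchor_map_add a 0 0
  rw [add_zero] at h
  exact left_eq_add.mp h

lemma anchor_neg (a : G) (φ : R) : S.anchor a (-φ) = - S.anchor a φ := by
  have h := S.anchor_map_add a φ (-φ)
  rw [add_neg_cancel, S.anchor_zero] at h
  linear_combination -h

lemma lieDeriv_apply (a : G) (α : G →ₗ[R] R) (b : G) :
    S.lieDeriv a α b = S.anchor a (α b) - α (S.bracket a b) := rfl

lemma dform_apply (φ : R) (a : G) : S.dform φ a = S.anchor a φ := rfl

end SkewAlgebroid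
section
open SkewAlgebroid
variable {R : Type*} [CommRing R] {G : Type*} [AddCommGroup G] [Module R G]
variable (S : SkewAlgebroid R G) (Ω : G →ₗ[R] G →ₗ[R] R)
  (e : G ≃ₗ[R] (G →ₗ[R] R))

lemma key (hΩskew : ∀ a b : G, Ω a b = - Ω b a) (he : ∀ a b : G, e a b = -(Ω a b))
    (μ : G →ₗ[R] R) (c : G) : e c (e.symm μ) = -(μ c) := by
  have h1 : μ (c) = e (e.symm μ) c := by rw [e.apply_symm_apply]
  rw [h1, he, he (e.symm μ) c, hΩskew c (e.symm μ)]

lemma koszul_eval (hΩskew : ∀ a b : G, Ω a b = - Ω b a)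
    (he : ∀ a b : G, e a b = -(Ω a b)) (a b c : G) :
    (S.koszul (fun μ => e.symm μ) (e a) (e b)) c =
      -S.anchor a (Ω b c) + Ω b (S.bracket a c) + S.anchor b (Ω a c)
        - Ω a (S.bracket b c) - S.anchor c (Ω a b) := by
  simp only [koszul, LinearMap.sub_apply, lieDeriv_apply, dform_apply, biv,
    e.symm_apply_apply, he]
  rw [hΩskew b a, S.anchor_neg, S.anchor_neg, S.anchor_neg, S.anchor_neg]
  ring

lemma schouten_eval (hΩskew : ∀ a b : G, Ω a b = - Ω b a)
    (he : ∀ a b : G, e a b = -(Ω a b)) (a b c : G) :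
    S.schouten (fun μ => e.symm μ) (e a) (e b) (e c)
      = S.dTwo Ω a b c + S.dTwo Ω a b c := by
  simp only [schouten, biv, e.symm_apply_apply, key Ω e hΩskew he, he, dTwo,
    koszul_eval S Ω e hΩskew he]
  rw [S.bracket_skew c b, S.bracket_skew b a, S.bracket_skew c a]
  simp only [map_neg, LinearMap.neg_apply, S.anchor_neg]
  rw [hΩskew c b, hΩskew b a, hΩskew c a,
    hΩskew b (S.bracket a c), hΩskew a (S.bracket b c), hΩskew c (S.bracket a b)]
  simp only [map_neg, LinearMap.neg_apply, S.anchor_neg]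
  ring

lemma lieBiv_eval (hΩskew : ∀ a b : G, Ω a b = - Ω b a)
    (he : ∀ a b : G, e a b = -(Ω a b)) (ξ a b : G) :
    S.lieBiv ξ (fun μ => e.symm μ) (e a) (e b) = - S.lieTwo ξ Ω a b := by
  simp only [lieBiv, biv, e.symm_apply_apply, key Ω e hΩskew he, lieDeriv_apply,
    he, lieTwo]
  rw [hΩskew b a, hΩskew b (S.bracket ξ a)]
  simp only [S.anchor_neg]
  ring

lemma wedge_eval (hΩskew : ∀ a b : G, Ω a b = - Ω b a)
    (he : ∀ a b : G, e a b = -(Ω a b)) (θ : G →ₗ[R] R) (a b c : G) :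
    wedgeVB (e.symm θ) (fun μ => e.symm μ) (e a) (e b) (e c)
      = -(θ a * Ω b c - θ b * Ω a c + θ c * Ω a b) := by
  simp only [wedgeVB, biv, key Ω e hΩskew he, e.symm_apply_apply, he]
  rw [hΩskew c b, hΩskew c a, hΩskew b a]
  ring

lemma cartan (hΩskew : ∀ a b : G, Ω a b = - Ω b a) (ξ a b : G) :
    S.lieTwo ξ Ω a b = S.dTwo Ω ξ a b + S.dOne (Ω ξ) a b := by
  simp only [lieTwo, dTwo, dOne]
  rw [hΩskew (S.bracket ξ b) a, hΩskew (S.bracket a b) ξ]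
  ring

lemma half_add [Algebra ℝ R] (x : R) (h : x + x = 0) : x = 0 := by
  have h2 : (2 : ℝ) • x = 0 := by rw [two_smul]; exact h
  have : x = (1/2 : ℝ) • ((2 : ℝ) • x) := by
    rw [smul_smul]; norm_num
  rw [this, h2, smul_zero]

lemma half_half [Algebra ℝ R] (x : R) : (1/2 : ℝ) • (x + x) = x := by
  rw [← two_smul ℝ, smul_smul]; norm_num

end
variable {R : Type*} [CommRing R] {G : Type*} [AddCommGroup G] [Module R G]

/-- for a nondegenerate 2-form `Ω` and a 1-form `θ`, with associated pair
`Π(α,β) = Ω(♯_Ωα,♯_Ωβ)` (sharp map `♯_Π = ♯_Ω = e.symm`) and `(e.symm θ) = ♯_Ω(θ)`: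
`(Ω,θ)` is locally conformally symplectic iff `(Π,(e.symm θ))` is a Jacobi structure; moreover
`((1/2)[Π,Π] − (e.symm θ)∧Π)(♭a,♭b,♭c) = (d_ρΩ + θ∧Ω)(a,b,c)` and `L_ξΠ(♭a,♭b) = −L_ξΩ(a,b)`. -/
theorem lcs_iff_jacobi [Algebra ℝ R]
    (S : SkewAlgebroid R G) (Ω : G →ₗ[R] G →ₗ[R] R)
    (hΩskew : ∀ a b : G, Ω a b = - Ω b a)
    (e : G ≃ₗ[R] (G →ₗ[R] R)) (he : ∀ a b : G, e a b = -(Ω a b))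
    (θ : G →ₗ[R] R) :
    (∀ a b c : G,
        (1/2 : ℝ) • S.schouten (fun μ => e.symm μ) (e a) (e b) (e c)
            - wedgeVB (e.symm θ) (fun μ => e.symm μ) (e a) (e b) (e c)
          = S.dTwo Ω a b c + (θ a * Ω b c - θ b * Ω a c + θ c * Ω a b))
    ∧ (∀ a b : G,
        S.lieBiv (e.symm θ) (fun μ => e.symm μ) (e a) (e b)
          = - S.lieTwo (e.symm θ) Ω a b)
    ∧ (((∀ a b c : G, S.dTwo Ω a b c + (θ a * Ω b c - θ b * Ω a c + θ c * Ω a b) = 0)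
          ∧ (∀ a b : G, S.dOne θ a b = 0))
        ↔ ((∀ α β γ : G →ₗ[R] R,
              S.schouten (fun μ => e.symm μ) α β γ
                = 2 * wedgeVB (e.symm θ) (fun μ => e.symm μ) α β γ)
            ∧ (∀ α β : G →ₗ[R] R,
                S.lieBiv (e.symm θ) (fun μ => e.symm μ) α β = 0))) := by
  
  have hkey : ∀ (μ : G →ₗ[R] R) (c : G), e c (e.symm μ) = -(μ c) := key Ω e hΩskew he
  have hθξ : ∀ x : G, Ω (e.symm θ) x = -(θ x) := by
    intro x
    have h1 : e (e.symm θ) x = -(Ω (e.symm θ) x) := he (e.symm θ) x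
    rw [e.apply_symm_apply] at h1
    linear_combination h1
  have hθξ0 : θ (e.symm θ) = 0 := by
    have h1 := hθξ (e.symm θ)
    have h2 : Ω (e.symm θ) (e.symm θ) = 0 := by
      have := hΩskew (e.symm θ) (e.symm θ)
      exact half_add _ (by linear_combination this)
    rw [h2] at h1
    linear_combination h1
  have stmt1 : ∀ a b c : G,
      (1/2 : ℝ) • S.schouten (fun μ => e.symm μ) (e a) (e b) (e c)
          - wedgeVB (e.symm θ) (fun μ => e.symm μ) (e a) (e b) (e c)
        = S.dTwo Ω a b c + (θ a * Ω b c - θ b * Ω a c + θ c * Ω a b) := by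
    intro a b c
    rw [schouten_eval S Ω e hΩskew he, wedge_eval Ω e hΩskew he, half_half]
    ring
  have stmt2 : ∀ a b : G,
      S.lieBiv (e.symm θ) (fun μ => e.symm μ) (e a) (e b)
        = - S.lieTwo (e.symm θ) Ω a b := fun a b => lieBiv_eval S Ω e hΩskew he (e.symm θ) a b
  refine ⟨stmt1, stmt2, ?_, ?_⟩
  · rintro ⟨h1, h2⟩
    have hdtwoξ : ∀ a b : G, S.dTwo Ω (e.symm θ) a b = 0 := by
      intro a b
      have := h1 (e.symm θ) a b
      rw [hθξ0, hθξ a, hθξ b] at this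
      linear_combination this
    have hlieTwo : ∀ a b : G, S.lieTwo (e.symm θ) Ω a b = 0 := by
      intro a b
      rw [cartan S Ω hΩskew, hdtwoξ]
      have hone : S.dOne (Ω (e.symm θ)) a b = - S.dOne θ a b := by
        simp only [dOne, hθξ, S.anchor_neg]
        ring
      rw [hone, h2]
      ring
    constructor
    · intro α β γ
      obtain ⟨a, rfl⟩ : ∃ a, α = e a := ⟨e.symm α, (e.apply_symm_apply α).symm⟩
      obtain ⟨b, rfl⟩ : ∃ b, β = e b := ⟨e.symm β, (e.apply_symm_apply β).symm⟩
      obtain ⟨c, rfl⟩ : ∃ c, γ = e c := ⟨e.symm γ, (e.apply_symm_apply γ).symm⟩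
      rw [schouten_eval S Ω e hΩskew he, wedge_eval Ω e hΩskew he]
      have := h1 a b c
      linear_combination 2 * this
    · intro α β
      obtain ⟨a, rfl⟩ : ∃ a, α = e a := ⟨e.symm α, (e.apply_symm_apply α).symm⟩
      obtain ⟨b, rfl⟩ : ∃ b, β = e b := ⟨e.symm β, (e.apply_symm_apply β).symm⟩
      rw [lieBiv_eval S Ω e hΩskew he, hlieTwo]
      ring
  · rintro ⟨h1, h2⟩
    have hlcs : ∀ a b c : G,
        S.dTwo Ω a b c + (θ a * Ω b c - θ b * Ω a c + θ c * Ω a b) = 0 := by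
      intro a b c
      have hs := h1 (e a) (e b) (e c)
      rw [schouten_eval S Ω e hΩskew he, wedge_eval Ω e hΩskew he] at hs
      exact half_add _ (by linear_combination hs)
    refine ⟨hlcs, ?_⟩
    intro a b
    have hdtwoξ : S.dTwo Ω (e.symm θ) a b = 0 := by
      have := hlcs (e.symm θ) a b
      rw [hθξ0, hθξ a, hθξ b] at this
      linear_combination this
    have hlieTwo : S.lieTwo (e.symm θ) Ω a b = 0 := by
      have hb := h2 (e a) (e b)
      rw [lieBiv_eval S Ω e hΩskew he] at hb
      linear_combination -hb
    have hc := cartan S Ω hΩskew (e.symm θ) a b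
    rw [hlieTwo, hdtwoξ] at hc
    have hone : S.dOne (Ω (e.symm θ)) a b = - S.dOne θ a b := by
      simp only [dOne, hθξ, S.anchor_neg]
      ring
    rw [hone] at hc
    linear_combination hc
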